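/- The star S_n on n vertices (a tree consisting of one center vertex adjacent to n − 1 leaves) is balanced if and only if n ≤ 5. -/

import Mathlib

open SimpleGraph

/-- A finite simple graph is *balanced* if there is a 2-coloring of the vertices such that
the numbers of vertices of the two colors differ by at most 1 and the numbers of
monochromatic edges of the two colors differ by at most 1. -/
def IsBalanced {V : Type*} (G : SimpleGraph V) : Prop :=
  ∃ c : V → Fin 2,
    |(({v | c v = 0} : Set V).ncard : ℤ) - (({v | c v = 1} : Set V).ncard : ℤ)| ≤ 1 ∧
    |(({e ∈ G.edgeSet | ∀ v ∈ e, c v = 0} : Set (Sym2 V)).ncard : ℤ) -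
      (({e ∈ G.edgeSet | ∀ v ∈ e, c v = 1} : Set (Sym2 V)).ncard : ℤ)| ≤ 1

/-- The star `S_n` on `n` vertices: the vertex `0` (the center) is adjacent to
all other vertices, and there are no other edges. -/
def starGraph (n : ℕ) : SimpleGraph (Fin n) :=
  SimpleGraph.fromRel (fun v _ => v.val = 0)

lemma vcount {n : ℕ} (c : Fin n → Fin 2) (i : Fin 2) :
    ({v | c v = i} : Set (Fin n)).ncard = (Finset.univ.filter fun v => c v = i).card := by
  rw [Set.ncard_eq_toFinset_card']
  congr 1
  ext v
  simp

open Finset in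
lemma starAdj {n : ℕ} (a b : Fin n) :
    (_root_.starGraph n).Adj a b ↔ a ≠ b ∧ (a.val = 0 ∨ b.val = 0) := by
  simp [_root_.starGraph]

lemma ecount {n : ℕ} (hn : 1 ≤ n) (c : Fin n → Fin 2) (i : Fin 2) :
    ({e ∈ (_root_.starGraph n).edgeSet | ∀ v ∈ e, c v = i} : Set (Sym2 (Fin n))).ncard
      = if c ⟨0, hn⟩ = i then (Finset.univ.filter fun v : Fin n => v ≠ ⟨0, hn⟩ ∧ c v = i).card else 0 := by
  set z : Fin n := ⟨0, hn⟩ with hz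
  have hzval : ∀ a : Fin n, a.val = 0 ↔ a = z := by
    intro a; constructor <;> intro h <;> simp_all [Fin.ext_iff, hz]
  by_cases hc : c z = i
  · rw [if_pos hc]
    have hset : ({e ∈ (_root_.starGraph n).edgeSet | ∀ v ∈ e, c v = i} : Set (Sym2 (Fin n)))
        = (fun v : Fin n => s(z, v)) '' {v | v ≠ z ∧ c v = i} := by
      ext e
      induction e using Sym2.ind with
      | _ a b =>
        simp only [Set.mem_setOf_eq, SimpleGraph.mem_edgeSet, starAdj, Sym2.mem_iff,
          Set.mem_image, hzval]
        constructor
        · rintro ⟨⟨hab, h0⟩, hm⟩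
          rcases h0 with h0 | h0
          · exact ⟨b, ⟨by rw [← h0]; exact fun h => hab h.symm, hm b (Or.inr rfl)⟩, by rw [h0]⟩
          · exact ⟨a, ⟨by rw [← h0]; exact hab, hm a (Or.inl rfl)⟩, by rw [h0, Sym2.eq_swap]⟩
        · rintro ⟨v, ⟨hv, hci⟩, he⟩
          rcases Sym2.eq_iff.mp he with ⟨rfl, rfl⟩ | ⟨rfl, rfl⟩
          · exact ⟨⟨fun h => hv h.symm, Or.inl rfl⟩, by rintro w (rfl | rfl) <;> assumption⟩
          · exact ⟨⟨fun h => hv h, Or.inr rfl⟩, by rintro w (rfl | rfl) <;> assumption⟩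
    rw [hset, Set.ncard_image_of_injective _ ?inj]
    · rw [Set.ncard_eq_toFinset_card']
      congr 1
      ext v
      simp
    · intro v w h
      rcases Sym2.eq_iff.mp h with ⟨_, h⟩ | ⟨h1, h2⟩
      · exact h
      · rw [← h1, h2]
  · rw [if_neg hc]
    convert Set.ncard_empty (Sym2 (Fin n))
    ext e
    induction e using Sym2.ind with
    | _ a b =>
      simp only [Set.mem_setOf_eq, SimpleGraph.mem_edgeSet, starAdj, Sym2.mem_iff,
        Set.mem_empty_iff_false, iff_false, not_and, hzval]
      rintro ⟨hab, (rfl | rfl)⟩ hm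
      · exact hc (hm _ (Or.inl rfl))
      · exact hc (hm _ (Or.inr rfl))

lemma balanced_iff (n : ℕ) (hn : 1 ≤ n) :
    IsBalanced (_root_.starGraph n) ↔ ∃ c : Fin n → Fin 2,
      |((Finset.univ.filter fun v => c v = 0).card : ℤ) -
        ((Finset.univ.filter fun v => c v = 1).card : ℤ)| ≤ 1 ∧
      |((if c ⟨0, hn⟩ = 0 then (Finset.univ.filter fun v : Fin n => v ≠ ⟨0, hn⟩ ∧ c v = 0).card else 0 : ℕ) : ℤ) -
       ((if c ⟨0, hn⟩ = 1 then (Finset.univ.filter fun v : Fin n => v ≠ ⟨0, hn⟩ ∧ c v = 1).card else 0 : ℕ) : ℤ)| ≤ 1 := by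
  unfold IsBalanced
  simp only [vcount, ecount hn]

theorem star_balanced_iff (n : ℕ) (hn : 1 ≤ n) :
    IsBalanced (_root_.starGraph n) ↔ n ≤ 5 := by
  rw [balanced_iff n hn]
  constructor
  · rintro ⟨c, h1, h2⟩
    set z : Fin n := ⟨0, hn⟩ with hz
    set A := (Finset.univ.filter fun v => c v = 0).card with hA
    set B := (Finset.univ.filter fun v => c v = 1).card with hB
    have h01 : ∀ a : Fin 2, (a = 1) ↔ ¬(a = 0) := by decide
    have hAB : A + B = n := by
      have h := Finset.card_filter_add_card_filter_not
        (s := (Finset.univ : Finset (Fin n))) (p := fun v => c v = 0)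
      rw [Finset.card_univ, Fintype.card_fin] at h
      have hfe : (Finset.univ.filter fun v => c v = 1)
          = Finset.univ.filter (fun v => ¬ c v = 0) := by
        ext v; simp [h01]
      rw [hA, hB, hfe]
      exact h
    have key : ∀ i : Fin 2, c z = i →
        (Finset.univ.filter fun v : Fin n => v ≠ z ∧ c v = i).card
          = (Finset.univ.filter fun v => c v = i).card - 1 ∧
        1 ≤ (Finset.univ.filter fun v => c v = i).card := by
      intro i hi
      have hmem : z ∈ Finset.univ.filter fun v => c v = i := by simp [hi]
      have hfe : (Finset.univ.filter fun v : Fin n => v ≠ z ∧ c v = i)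
          = (Finset.univ.filter fun v => c v = i).erase z := by
        ext v
        simp [Finset.mem_erase, and_comm]
      constructor
      · rw [hfe, Finset.card_erase_of_mem hmem]
      · exact Finset.card_pos.mpr ⟨z, hmem⟩
    rcases (by decide : ∀ a : Fin 2, a = 0 ∨ a = 1) (c z) with hc | hc
    · obtain ⟨he, hA1⟩ := key 0 hc
      rw [if_pos hc, if_neg (by rw [hc]; decide), he] at h2
      rw [abs_le] at h1 h2
      omega
    · obtain ⟨he, hB1⟩ := key 1 hc
      rw [if_neg (by rw [hc]; decide), if_pos hc, he] at h2
      rw [abs_le] at h1 h2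
      omega
  · intro h
    interval_cases n <;> revert hn <;> decide
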